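/- Suppose a² < 4q and that θ/π is irrational, where θ = arccos(a/(2√q)) ∈ [0, π]. Then limsup_{X→∞} |M(X)|/q^{X/2} = 2·√((q + 1 − a)/(4q − a²)) = √(1 + (a − 2)²/(4q − a²)); in particular, for every ε > 0 there exist infinitely many positive integers X with |M(X)| > (2·√((q + 1 − a)/(4q − a²)) − ε)·q^{X/2}. -/

import Mathlib

open Real Filter

/-- The coefficient sequence `c_N` with `c_0 = 1`, `c_1 = a - q - 1`,
`c_2 = a*c_1 - q*c_0 + q`, and `c_N = a*c_{N-1} - q*c_{N-2}` for `N ≥ 3`;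
these are the Taylor coefficients at `u = 0` of `(1-u)(1-qu)/(1-au+qu²)`,
the reciprocal of the zeta function of an elliptic curve over `F_q` with
Frobenius trace `a`. -/
def mertC (q a : ℤ) : ℕ → ℤ
  | 0 => 1
  | 1 => a - q - 1
  | 2 => a * (a - q - 1) - q * 1 + q
  | (N + 3) => a * mertC q a (N + 2) - q * mertC q a (N + 1)

/-- `M(X) = ∑_{N=0}^{X-1} c_N`, the Mertens summatory function of the
Möbius function of an elliptic curve over `F_q` with Frobenius trace `a`. -/
def mertM (q a : ℤ) (X : ℕ) : ℤ := ∑ N ∈ Finset.range X, mertC q a N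

lemma mertM_succ (q a : ℤ) (n : ℕ) : mertM q a (n+1) = mertM q a n + mertC q a n :=
  Finset.sum_range_succ _ _

lemma mertM_rec (q a : ℤ) (X : ℕ) :
    mertM q a (X+3) = a * mertM q a (X+2) - q * mertM q a (X+1) := by
  induction X with
  | zero => simp [mertM_succ, show mertM q a 0 = 0 from rfl, mertC]; ring
  | succ X ih =>
    have e4 : mertM q a (X+4) = mertM q a (X+3) + mertC q a (X+3) := mertM_succ q a (X+3)
    have e3 : mertM q a (X+3) = mertM q a (X+2) + mertC q a (X+2) := mertM_succ q a (X+2)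
    have e2 : mertM q a (X+2) = mertM q a (X+1) + mertC q a (X+1) := mertM_succ q a (X+1)
    have ec : mertC q a (X+3) = a * mertC q a (X+2) - q * mertC q a (X+1) := rfl
    show mertM q a (X+4) = a * mertM q a (X+3) - q * mertM q a (X+2)
    linear_combination e4 + ec - a * e3 + q * e2 + ih

/-- An irrational number admits arbitrarily small nonzero "steps" `n ξ = k + d`. -/
lemma exists_small_step {ξ : ℝ} (hξ : Irrational ξ) {ε : ℝ} (hε : 0 < ε) :
    ∃ (n : ℕ) (k : ℤ) (d : ℝ), 1 ≤ n ∧ (n : ℝ) * ξ = k + d ∧ d ≠ 0 ∧ |d| < ε := by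
  have hdense : Dense ((AddSubgroup.closure {ξ, 1} : AddSubgroup ℝ) : Set ℝ) := by
    rcases AddSubgroup.dense_or_cyclic (AddSubgroup.closure {ξ, 1}) with h | ⟨g, hg⟩
    · exact h
    · exfalso
      have hξmem : ξ ∈ AddSubgroup.closure ({ξ, 1} : Set ℝ) :=
        AddSubgroup.subset_closure (by simp)
      have h1mem : (1:ℝ) ∈ AddSubgroup.closure ({ξ, 1} : Set ℝ) :=
        AddSubgroup.subset_closure (by simp)
      rw [hg, AddSubgroup.mem_closure_singleton] at hξmem h1mem
      obtain ⟨m, hm⟩ := hξmem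
      obtain ⟨n, hn⟩ := h1mem
      have hm' : (m:ℝ) * g = ξ := by rwa [zsmul_eq_mul] at hm
      have hn' : (n:ℝ) * g = 1 := by rwa [zsmul_eq_mul] at hn
      have hn0 : n ≠ 0 := by rintro rfl; simp at hn'
      have hnR : (n:ℝ) ≠ 0 := Int.cast_ne_zero.mpr hn0
      refine hξ ⟨(m : ℚ) / (n : ℚ), ?_⟩
      push_cast
      rw [div_eq_iff hnR]
      linear_combination (n:ℝ) * hm' - (m:ℝ) * hn'
  have hmin : (0:ℝ) < min ε 1 := lt_min hε one_pos
  obtain ⟨g, hgS, hgIoo⟩ := hdense.exists_between hmin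
  rw [SetLike.mem_coe, AddSubgroup.mem_closure_pair] at hgS
  obtain ⟨m, c, hmc⟩ := hgS
  have hmc' : (m:ℝ) * ξ + (c:ℝ) = g := by
    have := hmc; rw [zsmul_eq_mul, zsmul_eq_mul, mul_one] at this; exact this
  have hg0 : 0 < g := hgIoo.1
  have hgε : g < ε := lt_of_lt_of_le hgIoo.2 (min_le_left _ _)
  have hg1 : g < 1 := lt_of_lt_of_le hgIoo.2 (min_le_right _ _)
  have hm0 : m ≠ 0 := by
    rintro rfl
    rw [Int.cast_zero, zero_mul, zero_add] at hmc'
    have h1 : (0:ℝ) < (c:ℝ) := hmc' ▸ hg0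
    have h2 : (c:ℝ) < 1 := hmc' ▸ hg1
    have h1' : 0 < c := by exact_mod_cast h1
    have h2' : c < 1 := by exact_mod_cast h2
    omega
  rcases hm0.lt_or_gt with hm | hm
  · refine ⟨(-m).toNat, c, -g, ?_, ?_, by simpa using hg0.ne', by rwa [abs_neg, abs_of_pos hg0]⟩
    · omega
    · have hcast : (((-m).toNat : ℕ) : ℝ) = -(m:ℝ) := by
        have h1 : ((-m).toNat : ℤ) = -m := Int.toNat_of_nonneg (by omega)
        exact_mod_cast congrArg (fun z : ℤ => (z:ℝ)) h1
      rw [hcast]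
      linear_combination -hmc'
  · refine ⟨m.toNat, -c, g, ?_, ?_, hg0.ne', by rwa [abs_of_pos hg0]⟩
    · omega
    · have hcast : ((m.toNat : ℕ) : ℝ) = (m:ℝ) := by
        have h1 : (m.toNat : ℤ) = m := Int.toNat_of_nonneg (by omega)
        exact_mod_cast congrArg (fun z : ℤ => (z:ℝ)) h1
      rw [hcast]
      push_cast
      linear_combination hmc'

/-- Forward orbit of an irrational rotation is dense modulo 1. -/
lemma forward_orbit_dense {ξ : ℝ} (hξ : Irrational ξ) (t : ℝ) {ε : ℝ} (hε : 0 < ε)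
    (m₀ : ℕ) : ∃ X : ℕ, m₀ ≤ X ∧ ∃ K : ℤ, |(X:ℝ) * ξ + t - K| < ε := by
  classical
  obtain ⟨n, k, d, hn1, hnξ, hd0, hdε⟩ := exists_small_step hξ hε
  set w : ℝ := (m₀:ℝ) * ξ + t with hw
  rcases hd0.lt_or_gt with hneg | hpos
  · -- d < 0 : step downwards to the floor
    have hex : ∃ j : ℕ, w + (j:ℝ) * d ≤ (⌊w⌋ : ℝ) := by
      obtain ⟨j, hj⟩ := exists_nat_ge ((w - (⌊w⌋:ℝ)) / (-d))
      refine ⟨j, ?_⟩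
      rw [div_le_iff₀ (by linarith)] at hj
      nlinarith
    set j := Nat.find hex with hj
    have hPj : w + (j:ℝ) * d ≤ (⌊w⌋:ℝ) := Nat.find_spec hex
    have hlow : (⌊w⌋:ℝ) + d < w + (j:ℝ) * d := by
      rcases Nat.eq_zero_or_pos j with h0 | hjpos
      · rw [h0]
        have := Int.floor_le w
        push_cast
        linarith
      · have hj1 : ¬ (w + ((j-1 : ℕ):ℝ) * d ≤ (⌊w⌋:ℝ)) := Nat.find_min hex (by omega)
        push_neg at hj1
        have hc : ((j-1:ℕ):ℝ) = (j:ℝ) - 1 := by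
          have : (1:ℕ) ≤ j := hjpos
          push_cast [this]
          ring
        rw [hc] at hj1
        nlinarith
    refine ⟨m₀ + j * n, Nat.le_add_right _ _, ⌊w⌋ + (j:ℤ) * k, ?_⟩
    have hX : ((m₀ + j*n : ℕ):ℝ) * ξ + t - ((⌊w⌋ + (j:ℤ)*k : ℤ):ℝ) = (w + (j:ℝ)*d) - (⌊w⌋:ℝ) := by
      push_cast
      rw [hw]
      linear_combination (j:ℝ) * hnξ
    rw [hX, abs_lt]
    have habs : -d < ε := by rw [abs_of_neg hneg] at hdε; linarith
    constructor <;> linarith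
  · -- d > 0 : step upwards to the ceiling
    have hex : ∃ j : ℕ, (⌈w⌉ : ℝ) ≤ w + (j:ℝ) * d := by
      obtain ⟨j, hj⟩ := exists_nat_ge (((⌈w⌉:ℝ) - w) / d)
      refine ⟨j, ?_⟩
      rw [div_le_iff₀ (by linarith)] at hj
      nlinarith
    set j := Nat.find hex with hj
    have hPj : (⌈w⌉:ℝ) ≤ w + (j:ℝ) * d := Nat.find_spec hex
    have hupp : w + (j:ℝ) * d < (⌈w⌉:ℝ) + d := by
      rcases Nat.eq_zero_or_pos j with h0 | hjpos
      · rw [h0]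
        have := Int.le_ceil w
        push_cast
        linarith
      · have hj1 : ¬ ((⌈w⌉:ℝ) ≤ w + ((j-1 : ℕ):ℝ) * d) := Nat.find_min hex (by omega)
        push_neg at hj1
        have hc : ((j-1:ℕ):ℝ) = (j:ℝ) - 1 := by
          have : (1:ℕ) ≤ j := hjpos
          push_cast [this]
          ring
        rw [hc] at hj1
        nlinarith
    refine ⟨m₀ + j * n, Nat.le_add_right _ _, ⌈w⌉ + (j:ℤ) * k, ?_⟩
    have hX : ((m₀ + j*n : ℕ):ℝ) * ξ + t - ((⌈w⌉ + (j:ℤ)*k : ℤ):ℝ) = (w + (j:ℝ)*d) - (⌈w⌉:ℝ) := by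
      push_cast
      rw [hw]
      linear_combination (j:ℝ) * hnξ
    rw [hX, abs_lt]
    have habs : d < ε := by rwa [abs_of_pos hpos] at hdε
    constructor <;> linarith

/-- Closed form for the Mertens function: `M(X+1) = C √q^(X+1) cos(Xθ + φ)`. -/
lemma mertM_closed_form (q a : ℤ) (hq : 2 ≤ q) (ha : a^2 < 4*q) :
    ∃ φ : ℝ, ∀ X : ℕ, (mertM q a (X+1) : ℝ) =
      (2 * Real.sqrt (((q:ℝ) + 1 - (a:ℝ))/(4*(q:ℝ) - (a:ℝ)^2))) * (Real.sqrt (q:ℝ))^(X+1) *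
        Real.cos ((X:ℝ) * Real.arccos ((a:ℝ)/(2*Real.sqrt (q:ℝ))) + φ) := by
  have hq2 : (2:ℝ) ≤ (q:ℝ) := by exact_mod_cast hq
  have hq0 : (0:ℝ) < (q:ℝ) := by linarith
  have haq : (a:ℝ)^2 < 4*(q:ℝ) := by exact_mod_cast ha
  have hDpos : (0:ℝ) < 4*(q:ℝ) - (a:ℝ)^2 := by linarith
  set s := Real.sqrt (q:ℝ) with hsdef
  have hs : 0 < s := Real.sqrt_pos.mpr hq0
  have hs2 : s^2 = (q:ℝ) := Real.sq_sqrt hq0.le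
  set D := Real.sqrt (4*(q:ℝ) - (a:ℝ)^2) with hDdef
  have hD : 0 < D := Real.sqrt_pos.mpr hDpos
  have hD2 : D^2 = 4*(q:ℝ) - (a:ℝ)^2 := Real.sq_sqrt hDpos.le
  have har : (a:ℝ) < 2*s := by
    by_contra h
    push_neg at h
    nlinarith
  have harneg : -(2*s) < (a:ℝ) := by
    by_contra h
    push_neg at h
    nlinarith
  set θ := Real.arccos ((a:ℝ)/(2*s)) with hθdef
  set α : ℂ := ((a:ℝ)/2 : ℝ) + ((D/2 : ℝ) : ℝ) * Complex.I with hα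
  set A : ℂ := ((1/2 : ℝ) : ℝ) + ((((q:ℝ) - (a:ℝ)/2)/D : ℝ) : ℝ) * Complex.I with hA
  have hα2 : α * α = ((a:ℝ) : ℂ) * α - ((q:ℝ) : ℂ) := by
    apply Complex.ext
    · simp [hα, Complex.mul_re]
      nlinarith [hD2]
    · simp [hα, Complex.mul_im]
      ring
  -- closed form over ℂ
  have cf : ∀ X : ℕ, ((mertM q a (X+1) : ℤ) : ℂ) = A * α^X + (starRingEnd ℂ) (A * α^X) := by
    intro X
    induction X using Nat.strong_induction_on with
    | _ X ih =>
      match X with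
      | 0 =>
        have h1 : mertM q a 1 = 1 := by simp [mertM, Finset.sum_range_one, mertC]
        rw [h1, pow_zero, mul_one, Complex.add_conj]
        rw [hA]
        norm_num
      | 1 =>
        have h2 : mertM q a 2 = a - q := by
          simp [mertM, Finset.sum_range_succ, mertC]
          try ring
        have hre : (2:ℝ) * ((A * α).re) = (a:ℝ) - (q:ℝ) := by
          simp [hA, hα, Complex.mul_re]
          field_simp
          ring
        rw [h2, pow_one, Complex.add_conj, hre]
        push_cast
        ring
      | (n+2) =>
        have ih1 := ih (n+1) (by omega)
        have ih0 := ih n (by omega)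
        have hrec : ((mertM q a (n+3) : ℤ) : ℂ) =
            ((a:ℤ) : ℂ) * ((mertM q a (n+2) : ℤ) : ℂ) - ((q:ℤ) : ℂ) * ((mertM q a (n+1) : ℤ) : ℂ) := by
          exact_mod_cast congrArg (fun z : ℤ => (z : ℂ)) (mertM_rec q a n)
        have e : ((a:ℤ) : ℂ) * (A * α^(n+1)) - ((q:ℤ) : ℂ) * (A * α^n) = A * α^(n+2) := by
          have hpow : α^(n+2) = α^n * (α * α) := by ring
          rw [hpow, hα2]
          push_cast
          ring
        have e' := congrArg (starRingEnd ℂ) e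
        simp only [map_sub, map_mul, map_intCast] at e'
        rw [hrec, ih1, ih0]
        simp only [map_mul]
        linear_combination e + e'
  -- polar form of α
  have hx1 : (a:ℝ)/(2*s) ≤ 1 := by
    rw [div_le_one (by positivity)]
    linarith
  have hx2 : -1 ≤ (a:ℝ)/(2*s) := by
    rw [le_div_iff₀ (by positivity)]
    linarith
  have hαp : α = ((s:ℝ) : ℂ) * Complex.exp ((θ:ℝ) * Complex.I) := by
    apply Complex.ext
    · simp [hα, Complex.mul_re, Complex.exp_ofReal_mul_I_re, Complex.exp_ofReal_mul_I_im]
      rw [hθdef, Real.cos_arccos hx2 hx1]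
      field_simp
      try ring
    · simp [hα, Complex.mul_im, Complex.exp_ofReal_mul_I_re, Complex.exp_ofReal_mul_I_im]
      rw [hθdef, Real.sin_arccos]
      have hx2eq : ((a:ℝ)/(2*s))^2 = (a:ℝ)^2/(4*(q:ℝ)) := by
        rw [div_pow]
        rw [mul_pow, hs2]
        norm_num
      rw [hx2eq]
      have harg : 1 - (a:ℝ)^2/(4*(q:ℝ)) = (4*(q:ℝ) - (a:ℝ)^2)/(4*(q:ℝ)) := by
        field_simp
      rw [harg]
      rw [show (4*(q:ℝ) - (a:ℝ)^2)/(4*(q:ℝ)) = (4*(q:ℝ) - (a:ℝ)^2) * (1/(4*(q:ℝ))) by ring]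
      rw [Real.sqrt_mul hDpos.le, ← hDdef]
      have h14 : Real.sqrt (1/(4*(q:ℝ))) = 1/(2*s) := by
        rw [show 1/(4*(q:ℝ)) = (1/(2*s))^2 by rw [div_pow, mul_pow, hs2]; norm_num,
          Real.sqrt_sq (by positivity)]
      rw [h14]
      field_simp
  -- polar form of A
  have hApolar : ((‖A‖ : ℝ) : ℂ) * Complex.exp ((Complex.arg A : ℝ) * Complex.I) = A :=
    Complex.norm_mul_exp_arg_mul_I A
  set r := ‖A‖ with hrdef
  set φ := Complex.arg A with hφdef
  have hnsq : Complex.normSq A = (q:ℝ)*((q:ℝ)+1-(a:ℝ))/(4*(q:ℝ) - (a:ℝ)^2) := by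
    rw [hA, Complex.normSq_add_mul_I]
    have hDiv : (((q:ℝ) - (a:ℝ)/2)/D)^2 = ((q:ℝ) - (a:ℝ)/2)^2/(4*(q:ℝ)-(a:ℝ)^2) := by
      rw [div_pow, hD2]
    rw [hDiv]
    have hDne : 4*(q:ℝ) - (a:ℝ)^2 ≠ 0 := hDpos.ne'
    rw [eq_div_iff hDne, add_mul, div_mul_cancel₀ _ hDne]
    ring
  have hr : r = s * Real.sqrt (((q:ℝ)+1-(a:ℝ))/(4*(q:ℝ) - (a:ℝ)^2)) := by
    rw [hrdef, Complex.norm_def, hnsq,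
      show (q:ℝ)*((q:ℝ)+1-(a:ℝ))/(4*(q:ℝ) - (a:ℝ)^2)
        = (q:ℝ) * (((q:ℝ)+1-(a:ℝ))/(4*(q:ℝ) - (a:ℝ)^2)) by ring,
      Real.sqrt_mul hq0.le, hsdef]
  refine ⟨φ, fun X => ?_⟩
  have h1 : (mertM q a (X+1) : ℝ) = 2 * ((A * α^X).re) := by
    have hcf := cf X
    rw [Complex.add_conj] at hcf
    exact_mod_cast hcf
  have h2 : A * α^X = ((r * s^X : ℝ) : ℂ) * Complex.exp (((X:ℝ)*θ + φ : ℝ) * Complex.I) := by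
    rw [← hApolar, hαp]
    rw [mul_pow, ← Complex.exp_nat_mul]
    push_cast
    have hexp : Complex.exp ((φ:ℝ) * Complex.I) * Complex.exp ((X:ℕ) * ((θ:ℝ) * Complex.I))
        = Complex.exp ((((X:ℕ):ℝ) * θ + φ : ℝ) * Complex.I) := by
      rw [← Complex.exp_add]
      congr 1
      push_cast
      ring
    push_cast at hexp
    linear_combination ((r:ℂ) * ((s:ℝ):ℂ)^X) * hexp
  have h3 : (A * α^X).re = r * s^X * Real.cos ((X:ℝ)*θ + φ) := by
    rw [h2, Complex.re_ofReal_mul, Complex.exp_ofReal_mul_I_re]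
  rw [h1, h3, hr]
  ring

theorem mertens_limsup_irrational_angle (q a : ℤ) (hq : 2 ≤ q) (ha : a ^ 2 < 4 * q)
    (hθ : Irrational (Real.arccos ((a : ℝ) / (2 * Real.sqrt (q : ℝ))) / Real.pi)) :
    Filter.limsup (fun X : ℕ => |(mertM q a X : ℝ)| / (q : ℝ) ^ ((X : ℝ) / 2)) Filter.atTop =
      2 * Real.sqrt (((q : ℝ) + 1 - (a : ℝ)) / (4 * (q : ℝ) - (a : ℝ) ^ 2)) ∧
    2 * Real.sqrt (((q : ℝ) + 1 - (a : ℝ)) / (4 * (q : ℝ) - (a : ℝ) ^ 2)) =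
      Real.sqrt (1 + ((a : ℝ) - 2) ^ 2 / (4 * (q : ℝ) - (a : ℝ) ^ 2)) ∧
    ∀ ε : ℝ, 0 < ε → ∀ X₀ : ℕ, ∃ X : ℕ, X₀ ≤ X ∧ 1 ≤ X ∧
      |(mertM q a X : ℝ)| >
        (2 * Real.sqrt (((q : ℝ) + 1 - (a : ℝ)) / (4 * (q : ℝ) - (a : ℝ) ^ 2)) - ε) *
          (q : ℝ) ^ ((X : ℝ) / 2) := by
  have hq2 : (2:ℝ) ≤ (q:ℝ) := by exact_mod_cast hq
  have hq0 : (0:ℝ) < (q:ℝ) := by linarith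
  have haq : (a:ℝ)^2 < 4*(q:ℝ) := by exact_mod_cast ha
  have hDpos : (0:ℝ) < 4*(q:ℝ) - (a:ℝ)^2 := by linarith
  have hs : 0 < Real.sqrt (q:ℝ) := Real.sqrt_pos.mpr hq0
  have hs2 : Real.sqrt (q:ℝ)^2 = (q:ℝ) := Real.sq_sqrt hq0.le
  have har : (a:ℝ) < 2*Real.sqrt (q:ℝ) := by
    by_contra h
    push_neg at h
    nlinarith
  have hnum : (0:ℝ) < (q:ℝ) + 1 - (a:ℝ) := by
    nlinarith [sq_nonneg (Real.sqrt (q:ℝ) - 1)]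
  set C := 2 * Real.sqrt (((q:ℝ) + 1 - (a:ℝ)) / (4 * (q:ℝ) - (a:ℝ) ^ 2)) with hCdef
  have hCpos : 0 < C := by
    have := Real.sqrt_pos.mpr (div_pos hnum hDpos)
    rw [hCdef]
    linarith
  set θ := Real.arccos ((a:ℝ)/(2*Real.sqrt (q:ℝ))) with hθdef
  obtain ⟨φ, hform⟩ := mertM_closed_form q a hq ha
  -- power identity
  have hpow : ∀ n : ℕ, (q:ℝ) ^ ((n:ℝ)/2) = (Real.sqrt (q:ℝ))^n := by
    intro n
    rw [show ((n:ℝ)/2) = (1/2 : ℝ) * (n:ℝ) by ring, Real.rpow_mul hq0.le,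
      Real.rpow_natCast, ← Real.sqrt_eq_rpow]
  have hspow : ∀ n : ℕ, (0:ℝ) < (Real.sqrt (q:ℝ))^n := fun n => pow_pos hs n
  -- the key formula for the normalized Mertens function
  have hf : ∀ X : ℕ, |(mertM q a (X+1) : ℝ)| / (q:ℝ) ^ ((((X+1) : ℕ):ℝ)/2)
      = C * |Real.cos ((X:ℝ)*θ + φ)| := by
    intro X
    rw [hform X, hpow (X+1), abs_mul, abs_mul]
    rw [abs_of_pos hCpos, abs_of_pos (hspow (X+1))]
    field_simp
    ring
  -- upper bound
  have hfle : ∀ X : ℕ, |(mertM q a X : ℝ)| / (q:ℝ) ^ ((X:ℝ)/2) ≤ C := by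
    intro X
    cases X with
    | zero =>
      simp [show mertM q a 0 = 0 from rfl]
      exact hCpos.le
    | succ X =>
      rw [hf X]
      calc C * |Real.cos ((X:ℝ)*θ + φ)| ≤ C * 1 :=
            mul_le_mul_of_nonneg_left (Real.abs_cos_le_one _) hCpos.le
        _ = C := mul_one C
  -- density of the rotation orbit gives large cosines
  have hcos : ∀ δ : ℝ, 0 < δ → ∀ m₀ : ℕ, ∃ X : ℕ, m₀ ≤ X ∧
      1 - δ < |Real.cos ((X:ℝ)*θ + φ)| := by
    intro δ hδ m₀
    have hπ : 0 < π := Real.pi_pos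
    set η := Real.sqrt δ with hηdef
    have hη : 0 < η := Real.sqrt_pos.mpr hδ
    have hη2 : η^2 = δ := Real.sq_sqrt hδ.le
    obtain ⟨X, hX, K, hK⟩ := forward_orbit_dense hθ (φ/π) (show (0:ℝ) < η/π by positivity) m₀
    have hy : |(X:ℝ)*θ + φ - (K:ℝ)*π| < η := by
      have heq : (X:ℝ)*θ + φ - (K:ℝ)*π = π * ((X:ℝ)*(θ/π) + φ/π - (K:ℝ)) := by
        field_simp
      rw [heq, abs_mul, abs_of_pos hπ]
      calc π * |(X:ℝ)*(θ/π) + φ/π - (K:ℝ)| < π * (η/π) :=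
            mul_lt_mul_of_pos_left hK hπ
        _ = η := by field_simp
    set y := (X:ℝ)*θ + φ - (K:ℝ)*π with hydef
    clear_value y
    have hcosy : Real.cos ((X:ℝ)*θ + φ) = (-1:ℝ)^K * Real.cos y := by
      rw [show (X:ℝ)*θ + φ = y + (K:ℝ)*π by rw [hydef]; ring]
      exact Real.cos_add_int_mul_pi y K
    refine ⟨X, hX, ?_⟩
    rw [hcosy, abs_mul]
    have habs1 : |(-1:ℝ)^K| = 1 := by
      rcases Int.even_or_odd K with h | h
      · rw [h.neg_one_zpow, abs_one]
      · rw [h.neg_one_zpow, abs_neg, abs_one]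
    rw [habs1, one_mul]
    have h1 : 1 - y^2/2 ≤ Real.cos y := Real.one_sub_sq_div_two_le_cos
    have h2 : y^2 < δ := by
      rw [← hη2]
      have := abs_lt.mp hy
      nlinarith
    have h3 : Real.cos y ≤ |Real.cos y| := le_abs_self _
    have h4 : (0:ℝ) ≤ y^2 := sq_nonneg y
    nlinarith [h1, h2, h3, h4]
  -- frequently large values
  have hfreq : ∀ ε : ℝ, 0 < ε → ∀ m₀ : ℕ, ∃ X : ℕ, m₀ ≤ X ∧ 1 ≤ X ∧
      C - ε < |(mertM q a X : ℝ)| / (q:ℝ) ^ ((X:ℝ)/2) := by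
    intro ε hε m₀
    set δ := min (ε/C) 1 / 2 with hδdef
    have hδpos : 0 < δ := by
      have h1 : 0 < ε/C := div_pos hε hCpos
      have : 0 < min (ε/C) 1 := lt_min h1 one_pos
      rw [hδdef]; linarith
    have hCδ : C * δ < ε := by
      have h1 : min (ε/C) 1 ≤ ε/C := min_le_left _ _
      have h3 : C * min (ε/C) 1 ≤ C * (ε/C) := mul_le_mul_of_nonneg_left h1 hCpos.le
      have h2 : C * (ε/C) = ε := by field_simp
      have h4 : C * δ = C * min (ε/C) 1 / 2 := by rw [hδdef]; ring
      rw [h4]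
      linarith
    obtain ⟨X, hXm, hXcos⟩ := hcos δ hδpos m₀
    refine ⟨X+1, by omega, by omega, ?_⟩
    rw [hf X]
    have hcle : |Real.cos ((X:ℝ)*θ + φ)| ≤ 1 := Real.abs_cos_le_one _
    nlinarith
  -- bounded above
  have hbdd : Filter.IsBoundedUnder (· ≤ ·) Filter.atTop
      (fun X : ℕ => |(mertM q a X : ℝ)| / (q:ℝ) ^ ((X:ℝ)/2)) :=
    Filter.isBoundedUnder_of ⟨C, fun X => hfle X⟩
  have hbdd0 : Filter.IsBoundedUnder (· ≥ ·) Filter.atTop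
      (fun X : ℕ => |(mertM q a X : ℝ)| / (q:ℝ) ^ ((X:ℝ)/2)) :=
    Filter.isBoundedUnder_of ⟨0, fun X =>
      div_nonneg (abs_nonneg _) (Real.rpow_pos_of_pos hq0 _).le⟩
  refine ⟨?_, ?_, ?_⟩
  · -- the limsup computation
    apply le_antisymm
    · apply Filter.limsup_le_of_le (hbdd0.isCoboundedUnder_le)
      exact Filter.Eventually.of_forall hfle
    · by_contra hlt
      push_neg at hlt
      set L := Filter.limsup (fun X : ℕ => |(mertM q a X : ℝ)| / (q:ℝ) ^ ((X:ℝ)/2)) Filter.atTop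
        with hLdef
      have hεp : 0 < (C - L)/2 := by linarith
      have hfr : ∃ᶠ X in Filter.atTop, C - (C - L)/2 ≤ |(mertM q a X : ℝ)| / (q:ℝ) ^ ((X:ℝ)/2) := by
        rw [Filter.frequently_atTop]
        intro m₀
        obtain ⟨X, hXm, _, hXgt⟩ := hfreq ((C - L)/2) hεp m₀
        exact ⟨X, hXm, hXgt.le⟩
      have := Filter.le_limsup_of_frequently_le hfr hbdd
      rw [← hLdef] at this
      linarith
  · -- algebraic identity between the two constants
    rw [hCdef]
    rw [show (2:ℝ) * Real.sqrt (((q:ℝ) + 1 - (a:ℝ)) / (4 * (q:ℝ) - (a:ℝ) ^ 2))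
        = Real.sqrt 4 * Real.sqrt (((q:ℝ) + 1 - (a:ℝ)) / (4 * (q:ℝ) - (a:ℝ) ^ 2)) by
      rw [show (4:ℝ) = 2^2 by norm_num, Real.sqrt_sq (by norm_num : (0:ℝ) ≤ 2)]]
    rw [← Real.sqrt_mul (by norm_num : (0:ℝ) ≤ 4)]
    congr 1
    field_simp
    ring
  · -- infinitely many large values
    intro ε hε X₀
    obtain ⟨X, hXm, hX1, hXgt⟩ := hfreq ε hε X₀
    refine ⟨X, hXm, hX1, ?_⟩
    have hqpow : (0:ℝ) < (q:ℝ) ^ ((X:ℝ)/2) := Real.rpow_pos_of_pos hq0 _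
    rw [gt_iff_lt, ← lt_div_iff₀ hqpow]
    exact hXgt
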